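/- arXiv:1810.08746 — 2 statements merged into one kernel-verified Lean document; each statement's English description precedes it below -/
import Mathlib

section
/- Let M be a real symmetric positive definite n×n matrix, S a real symmetric positive semidefinite n×n matrix, and δ a real number. If ā ∈ ℝⁿ solves the weak-form differential filter system (M + δ² S) ā = M a for a given a ∈ ℝⁿ, then āᵀ M ā + δ² āᵀ S ā = āᵀ M a, and consequently āᵀ M ā ≤ aᵀ M a, i.e., the filter is nonexpansive in the M-weighted norm ‖x‖_M = √(xᵀ M x). -/
open Matrix

/-- If `ā` solves the weak-form differential filter system `(M + δ² S) ā = M a`, then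
`āᵀ M ā + δ² āᵀ S ā = āᵀ M a`, and consequently `āᵀ M ā ≤ aᵀ M a`, i.e. the filter is
nonexpansive in the `M`-weighted norm `‖x‖_M = √(xᵀ M x)`. -/
theorem df_nonexpansive {n : ℕ}
    (M S : Matrix (Fin n) (Fin n) ℝ)
    (hM : M.PosDef) (hS : S.PosSemidef) (δ : ℝ)
    (a abar : Fin n → ℝ)
    (hsol : (M + δ ^ 2 • S) *ᵥ abar = M *ᵥ a) :
    abar ⬝ᵥ (M *ᵥ abar) + δ ^ 2 * (abar ⬝ᵥ (S *ᵥ abar)) = abar ⬝ᵥ (M *ᵥ a) ∧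
    abar ⬝ᵥ (M *ᵥ abar) ≤ a ⬝ᵥ (M *ᵥ a) ∧
    Real.sqrt (abar ⬝ᵥ (M *ᵥ abar)) ≤ Real.sqrt (a ⬝ᵥ (M *ᵥ a)) := by
  have h1 : abar ⬝ᵥ (M *ᵥ abar) + δ ^ 2 * (abar ⬝ᵥ (S *ᵥ abar)) = abar ⬝ᵥ (M *ᵥ a) := by
    have := congrArg (fun v => abar ⬝ᵥ v) hsol
    simpa [Matrix.add_mulVec, Matrix.smul_mulVec, dotProduct_add, dotProduct_smul,
      smul_eq_mul] using this
  -- setup sqrt of M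
  open scoped MatrixOrder in set B := CFC.sqrt M with hBdef
  open scoped MatrixOrder in have hBB : B * B = M := CFC.sqrt_mul_sqrt_self M hM.posSemidef.nonneg
  have hBH : Bᵀ = B := by
    open scoped MatrixOrder in have := (CFC.sqrt_nonneg M).posSemidef.isHermitian
    simpa [← hBdef, Matrix.IsHermitian, Matrix.conjTranspose_eq_transpose_of_trivial] using this
  have key : ∀ x y : Fin n → ℝ, x ⬝ᵥ (M *ᵥ y) = (B *ᵥ x) ⬝ᵥ (B *ᵥ y) := by
    intro x y
    rw [← hBB, ← Matrix.mulVec_mulVec, Matrix.dotProduct_mulVec x B,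
      ← Matrix.mulVec_transpose, hBH]
  -- Cauchy-Schwarz
  have hp : (0:ℝ) ≤ abar ⬝ᵥ (M *ᵥ abar) := by
    have := hM.posSemidef.dotProduct_mulVec_nonneg abar; simpa using this
  have hq : (0:ℝ) ≤ a ⬝ᵥ (M *ᵥ a) := by
    have := hM.posSemidef.dotProduct_mulVec_nonneg a; simpa using this
  have hCS : (abar ⬝ᵥ (M *ᵥ a)) ^ 2 ≤ (abar ⬝ᵥ (M *ᵥ abar)) * (a ⬝ᵥ (M *ᵥ a)) := by
    rw [key, key, key]
    have := Finset.sum_mul_sq_le_sq_mul_sq Finset.univ (B *ᵥ abar) (B *ᵥ a)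
    simpa [dotProduct, pow_two, mul_comm, mul_assoc, mul_left_comm] using this
  have hpr : abar ⬝ᵥ (M *ᵥ abar) ≤ abar ⬝ᵥ (M *ᵥ a) := by
    have hSnn : (0:ℝ) ≤ abar ⬝ᵥ (S *ᵥ abar) := by
      have := hS.dotProduct_mulVec_nonneg abar; simpa using this
    nlinarith [sq_nonneg δ]
  have h2 : abar ⬝ᵥ (M *ᵥ abar) ≤ a ⬝ᵥ (M *ᵥ a) := by
    nlinarith
  exact ⟨h1, h2, Real.sqrt_le_sqrt h2⟩
end

section
/- Let M be a real symmetric positive definite n×n matrix, S a real symmetric positive semidefinite n×n matrix, δ a real number, and m ≥ 1 a natural number. If ā ∈ ℝⁿ solves the weak-form higher-order differential filter system (M + δ² S^m) ā = M a for a given a ∈ ℝⁿ, then āᵀ M ā ≤ aᵀ M a, i.e., HODF version 2 is nonexpansive in the M-weighted norm ‖x‖_M = √(xᵀ M x). -/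
open Matrix

/-- Cauchy–Schwarz for a positive semidefinite bilinear form given by a matrix. -/
lemma psd_cauchy_schwarz {n : ℕ} (M : Matrix (Fin n) (Fin n) ℝ)
    (hM : M.PosSemidef) (x y : Fin n → ℝ) :
    (x ⬝ᵥ (M *ᵥ y)) ^ 2 ≤ (x ⬝ᵥ (M *ᵥ x)) * (y ⬝ᵥ (M *ᵥ y)) := by
  obtain ⟨B, rfl⟩ : ∃ B : Matrix (Fin n) (Fin n) ℝ, M = Bᴴ * B := by
    open scoped MatrixOrder in exact CStarAlgebra.nonneg_iff_eq_star_mul_self.mp hM.nonneg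
  have key : ∀ u v : Fin n → ℝ, u ⬝ᵥ ((Bᴴ * B) *ᵥ v) = (B *ᵥ u) ⬝ᵥ (B *ᵥ v) := by
    intro u v
    rw [← Matrix.mulVec_mulVec, Matrix.dotProduct_mulVec, Matrix.conjTranspose_eq_transpose_of_trivial,
      Matrix.vecMul_transpose]
  rw [key, key, key]
  have h := Finset.sum_mul_sq_le_sq_mul_sq Finset.univ (B *ᵥ x) (B *ᵥ y)
  simpa [dotProduct, sq] using h

/-- If `ā` solves the weak-form higher-order differential filter system
`(M + δ² Sᵐ) ā = M a`, then `āᵀ M ā ≤ aᵀ M a`, i.e. HODF version 2 is nonexpansive in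
the `M`-weighted norm `‖x‖_M = √(xᵀ M x)`. -/
theorem hodf2_nonexpansive {n : ℕ}
    (M S : Matrix (Fin n) (Fin n) ℝ)
    (hM : M.PosDef) (hS : S.PosSemidef) (δ : ℝ) (m : ℕ) (hm : 1 ≤ m)
    (a abar : Fin n → ℝ)
    (hsol : (M + δ ^ 2 • S ^ m) *ᵥ abar = M *ᵥ a) :
    abar ⬝ᵥ (M *ᵥ abar) ≤ a ⬝ᵥ (M *ᵥ a) ∧
    Real.sqrt (abar ⬝ᵥ (M *ᵥ abar)) ≤ Real.sqrt (a ⬝ᵥ (M *ᵥ a)) := by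
  set p := abar ⬝ᵥ (M *ᵥ abar) with hp
  set q := a ⬝ᵥ (M *ᵥ a) with hq
  have hSm : (S ^ m).PosSemidef := hS.pow m
  have hSnn : 0 ≤ abar ⬝ᵥ (S ^ m *ᵥ abar) := by
    simpa using hSm.re_dotProduct_nonneg abar
  have hexp : abar ⬝ᵥ (M *ᵥ a) = p + δ ^ 2 * (abar ⬝ᵥ (S ^ m *ᵥ abar)) := by
    rw [← hsol]
    simp [Matrix.add_mulVec, Matrix.smul_mulVec, dotProduct_add,
      dotProduct_smul, smul_eq_mul, hp]
  have hple : p ≤ abar ⬝ᵥ (M *ᵥ a) := by nlinarith [sq_nonneg δ]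
  have hcs := psd_cauchy_schwarz M hM.posSemidef abar a
  have hpnn : 0 ≤ p := by simpa using hM.posSemidef.re_dotProduct_nonneg abar
  have hqnn : 0 ≤ q := by simpa using hM.posSemidef.re_dotProduct_nonneg a
  have hle : p ≤ q := by nlinarith
  exact ⟨hle, Real.sqrt_le_sqrt hle⟩
end
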